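/- If $\bar v^0 = 0$ and $\bar v^{n+1} = \bar v^n + \frac{1}{n+1}(c - (1-\gamma)\bar v^n)$ with $c > 0$ and $0 < \gamma < 1$, then for all $n \ge 1$, $(n+1)\,(\bar v^{n+1} - \bar v^n) \le \bar v^{n+1}$; i.e. the forward increment at step $n$, multiplied by $n+1$, is at most the next iterate. -/

import Mathlib

theorem stmt_3 (c γ : ℝ) (hc : 0 < c) (hγ0 : 0 < γ) (hγ1 : γ < 1)
    (v : ℕ → ℝ) (h0 : v 0 = 0)
    (hrec : ∀ n : ℕ, v (n + 1) = v n + (1 / (n + 1 : ℝ)) * (c - (1 - γ) * v n)) :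
    ∀ n : ℕ, 1 ≤ n → ((n : ℝ) + 1) * (v (n + 1) - v n) ≤ v (n + 1) := by
  have aux : ∀ n : ℕ, c * n / (n + 1) ≤ v n := by
    intro n
    induction n with
    | zero => simp [h0]
    | succ n ih =>
      have hn1 : (0:ℝ) < (n:ℝ) + 1 := by positivity
      have hn2 : (0:ℝ) < (n:ℝ) + 2 := by positivity
      have ih' : c * n ≤ v n * ((n:ℝ) + 1) := by
        rw [div_le_iff₀ hn1] at ih; linarith
      have hv0 : 0 ≤ v n := le_trans (by positivity) ih
      have hv1 : v (n+1) * ((n:ℝ)+1) = v n * ((n:ℝ)+γ) + c := by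
        rw [hrec n]; field_simp; ring
      rw [div_le_iff₀ (by push_cast; linarith)]
      push_cast
      rw [← mul_le_mul_iff_of_pos_right hn1]
      nlinarith [mul_le_mul_of_nonneg_right ih' (show (0:ℝ) ≤ (n:ℝ)+γ by positivity),
        mul_le_mul_of_nonneg_right (le_of_eq hv1.symm) hn2.le,
        mul_nonneg (mul_nonneg hγ0.le hc.le) (Nat.cast_nonneg n : (0:ℝ) ≤ n),
        mul_nonneg hγ0.le hv0]
  intro n hn
  have hn1 : (0:ℝ) < (n:ℝ) + 1 := by positivity
  have hv0 : 0 ≤ v n := le_trans (by positivity) (aux n)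
  have ih' : c * n ≤ v n * ((n:ℝ) + 1) := by
    have := aux n
    rw [div_le_iff₀ hn1] at this; linarith
  have key : ((n:ℝ)+1) * (v (n+1) - v n) = c - (1-γ)*v n := by
    rw [hrec n]; field_simp; ring
  rw [key, hrec n, ← sub_nonneg]
  have expand : v n + 1/((n:ℝ)+1) * (c - (1-γ)*v n) - (c - (1-γ)*v n)
      = (v n * ((n:ℝ)+1) - (n:ℝ)*(c - (1-γ)*v n)) / ((n:ℝ)+1) := by
    field_simp; ring
  rw [expand]
  apply div_nonneg _ hn1.le
  nlinarith [mul_nonneg (mul_nonneg (sub_nonneg.2 hγ1.le) hv0) (Nat.cast_nonneg n : (0:ℝ) ≤ n)]
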